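/- Let Γ be a countable group acting on a countable set I such that every orbit Γ·i is infinite, let X₀ be a standard Borel space and μ₀ a probability measure on X₀, and let μ = μ₀^{⊗I} be the product probability measure on X₀^I. Then the generalized Bernoulli action is ergodic: if S ⊆ X₀^I is measurable and μ(T_g⁻¹(S) Δ S) = 0 for every g ∈ Γ, then μ(S) = 0 or μ(S) = 1. -/

import Mathlib

open MeasureTheory ProbabilityTheory Set MeasurableSpace
open scoped Pointwise symmDiff ENNReal NNReal

/-- B. H. Neumann-type lemma: if all orbits are infinite, a finite set can be moved off
itself by some group element. -/
lemma exists_smul_disjoint {Γ I : Type*} [Group Γ] [MulAction Γ I]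
    (horb : ∀ i : I, (MulAction.orbit Γ i).Infinite) (s : Finset I) :
    ∃ g : Γ, ∀ i ∈ s, ∀ j ∈ s, g⁻¹ • i ≠ j := by
  classical
  by_contra hcon
  push_neg at hcon
  set t : Finset (I × I) := (s ×ˢ s).filter (fun p => ∃ h : Γ, h • p.2 = p.1) with ht
  set c : I × I → Γ := fun p => if h : ∃ h : Γ, h • p.2 = p.1 then h.choose else 1 with hc
  have hcovers : ⋃ p ∈ t, (c p) • ((MulAction.stabilizer Γ p.2 : Subgroup Γ) : Set Γ)
      = Set.univ := by
    ext γ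
    simp only [Set.mem_iUnion, Set.mem_univ, iff_true]
    obtain ⟨i, hi, j, hj, hij⟩ := hcon γ⁻¹
    rw [inv_inv] at hij
    have hex : ∃ h : Γ, h • (j, i).2 = (j, i).1 := ⟨γ, hij⟩
    refine ⟨(j, i), by simp [ht, Finset.mem_filter, hi, hj, hex], ?_⟩
    rw [mem_leftCoset_iff]
    have hcj : c (j, i) • i = j := by
      rw [hc]; simp only [hex, dif_pos]; exact hex.choose_spec
    simp only [SetLike.mem_coe, MulAction.mem_stabilizer_iff, mul_smul, hij, inv_smul_eq_iff, hcj]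
  obtain ⟨p, hp, hfin⟩ := Subgroup.exists_finiteIndex_of_leftCoset_cover hcovers
  haveI := hfin
  have : Finite (Γ ⧸ MulAction.stabilizer Γ p.2) := inferInstance
  have : Finite (MulAction.orbit Γ p.2) :=
    Finite.of_equiv _ (MulAction.orbitEquivQuotientStabilizer Γ p.2).symm
  exact (horb p.2) (Set.toFinite _)

/-- The generalized Bernoulli shift preserves the product measure (characterized by its
values on measurable rectangles). -/
lemma bernoulli_preimage_eq {Γ I X₀ : Type*} [Group Γ] [MulAction Γ I] [MeasurableSpace X₀]
    (μ₀ : Measure X₀) (μ : Measure (I → X₀)) [IsProbabilityMeasure μ]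
    (hμ : ∀ (s : Finset I) (f : I → Set X₀), (∀ i, MeasurableSet (f i)) →
      μ {x : I → X₀ | ∀ i ∈ s, x i ∈ f i} = ∏ i ∈ s, μ₀ (f i))
    (g : Γ) {A : Set (I → X₀)} (hA : MeasurableSet A) :
    μ ((fun x : I → X₀ => fun i : I => x (g⁻¹ • i)) ⁻¹' A) = μ A := by
  classical
  set T : (I → X₀) → (I → X₀) := fun x i => x (g⁻¹ • i) with hTdef
  have hT : Measurable T := measurable_pi_lambda _ fun i => measurable_pi_apply _
  have hmap : μ.map T = μ := by
    haveI : IsProbabilityMeasure (μ.map T) := Measure.isProbabilityMeasure_map hT.aemeasurable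
    refine MeasureTheory.ext_of_generate_finite _ generateFrom_squareCylinders.symm
      (isPiSystem_squareCylinders (fun _ u hu v hv _ => hu.inter hv)
        (fun _ => MeasurableSet.univ)) ?_ (by simp)
    rintro A' ⟨s, f, hf, rfl⟩
    simp only [Set.mem_univ_pi, Set.mem_setOf_eq] at hf
    rw [Measure.map_apply hT (MeasurableSet.pi (Finset.countable_toSet _) fun i _ => hf i)]
    have hpre : T ⁻¹' ((s : Set I).pi f)
        = {x : I → X₀ | ∀ j ∈ s.image (fun i => g⁻¹ • i), x j ∈ f (g • j)} := by
      ext x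
      simp only [Set.mem_preimage, Set.mem_pi, Finset.mem_coe, Set.mem_setOf_eq,
        Finset.mem_image, hTdef]
      constructor
      · rintro h j ⟨i, hi, rfl⟩
        rw [smul_inv_smul]; exact h i hi
      · intro h i hi
        have := h (g⁻¹ • i) ⟨i, hi, rfl⟩
        rwa [smul_inv_smul] at this
    have hpi : (s : Set I).pi f = {x : I → X₀ | ∀ i ∈ s, x i ∈ f i} := by
      ext x; simp [Set.mem_pi]
    rw [hpre, hμ _ _ (fun j => hf (g • j)), hpi, hμ _ _ hf,
      Finset.prod_image (fun a _ b _ h => MulAction.injective (g⁻¹ : Γ) h)]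
    exact Finset.prod_congr rfl fun i _ => by rw [smul_inv_smul]
  conv_rhs => rw [← hmap]
  rw [Measure.map_apply hT hA]

/-- The coordinates of the product measure are independent. -/
lemma bernoulli_iIndepFun {I X₀ : Type*} [MeasurableSpace X₀]
    (μ₀ : Measure X₀) (μ : Measure (I → X₀))
    (hμ : ∀ (s : Finset I) (f : I → Set X₀), (∀ i, MeasurableSet (f i)) →
      μ {x : I → X₀ | ∀ i ∈ s, x i ∈ f i} = ∏ i ∈ s, μ₀ (f i)) :
    iIndepFun (fun (i : I) (x : I → X₀) => x i) μ := by
  classical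
  rw [ProbabilityTheory.iIndepFun_iff_measure_inter_preimage_eq_mul]
  intro s sets hsets
  set f : I → Set X₀ := fun i => if i ∈ s then sets i else Set.univ with hfdef
  have hf : ∀ i, MeasurableSet (f i) := fun i => by
    by_cases h : i ∈ s
    · simpa [hfdef, h] using hsets i h
    · simp [hfdef, h]
  have h1 : (⋂ i ∈ s, (fun x : I → X₀ => x i) ⁻¹' sets i) = {x | ∀ i ∈ s, x i ∈ f i} := by
    ext x
    simp only [Set.mem_iInter, Set.mem_preimage, Set.mem_setOf_eq]
    exact forall₂_congr fun i hi => by simp [hfdef, hi]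
  have h2 : ∀ i ∈ s, μ ((fun x : I → X₀ => x i) ⁻¹' sets i) = μ₀ (sets i) := by
    intro i hi
    have h := hμ {i} (fun _ => sets i) (fun _ => hsets i hi)
    simp only [Finset.mem_singleton, Finset.prod_singleton] at h
    rw [← h]
    congr 1
    ext x
    simp
  rw [h1, hμ s f hf]
  refine Finset.prod_congr rfl fun i hi => ?_
  rw [h2 i hi, hfdef]
  simp [hi]

/-- The generalized Bernoulli action of a countable group `Γ` on `X₀^I`, where `Γ` acts on
the countable set `I` with infinite orbits, is ergodic with respect to the product
probability measure `μ = μ₀^{⊗ I}` (characterized by its values on measurable cylinder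
sets): any measurable set `S` that is invariant up to null sets under all the shifts
`T_g x = fun i => x (g⁻¹ • i)` has measure `0` or `1`. -/
theorem stmt3 {Γ I X₀ : Type*} [Group Γ] [MulAction Γ I] [Countable Γ] [Countable I]
    [MeasurableSpace X₀] [StandardBorelSpace X₀]
    (μ₀ : Measure X₀) [IsProbabilityMeasure μ₀]
    (μ : Measure (I → X₀)) [IsProbabilityMeasure μ]
    (hμ : ∀ (s : Finset I) (f : I → Set X₀), (∀ i, MeasurableSet (f i)) →
      μ {x : I → X₀ | ∀ i ∈ s, x i ∈ f i} = ∏ i ∈ s, μ₀ (f i))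
    (horb : ∀ i : I, (MulAction.orbit Γ i).Infinite)
    (S : Set (I → X₀)) (hS : MeasurableSet S)
    (hinv : ∀ g : Γ, μ (symmDiff ((fun x : I → X₀ => fun i : I => x (g⁻¹ • i)) ⁻¹' S) S) = 0) :
    μ S = 0 ∨ μ S = 1 := by
  classical
  have hfun := bernoulli_iIndepFun μ₀ μ hμ
  rw [ProbabilityTheory.iIndepFun_iff_iIndep] at hfun
  have halg : IsSetAlgebra (measurableCylinders (fun _ : I => X₀)) :=
    { empty_mem := empty_mem_measurableCylinders _
      compl_mem := fun _ h => compl_mem_measurableCylinders h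
      union_mem := fun _ _ hs ht => union_mem_measurableCylinders hs ht }
  have hdense : μ.MeasureDense (measurableCylinders (fun _ : I => X₀)) :=
    Measure.MeasureDense.of_generateFrom_isSetAlgebra_finite (μ := μ) halg
      generateFrom_measurableCylinders.symm
  set a := μ S with ha
  have ha1 : a ≤ 1 := prob_le_one
  -- a general triangle-type inequality
  have habs : ∀ U V : Set (I → X₀), μ U ≤ μ V + μ (U ∆ V) := by
    intro U V
    refine le_trans (measure_mono ?_) (measure_union_le _ _)
    intro x hx
    by_cases h : x ∈ V
    · exact Or.inl h
    · exact Or.inr (by simp [Set.mem_symmDiff, hx, h])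
  -- the key approximate self-independence estimate
  have key : ∀ ε : ℝ≥0∞, 0 < ε → a ≤ a * a + 5 * ε ∧ a * a ≤ a + 5 * ε := by
    intro ε hε
    obtain ⟨r, hr0, hrε⟩ : ∃ r : ℝ, 0 < r ∧ ENNReal.ofReal r ≤ ε := by
      refine ⟨(min ε 1).toReal, ENNReal.toReal_pos ?_ ?_, ?_⟩
      · exact (lt_min hε zero_lt_one).ne'
      · exact ne_top_of_le_ne_top ENNReal.one_ne_top (min_le_right _ _)
      · rw [ENNReal.ofReal_toReal (ne_top_of_le_ne_top ENNReal.one_ne_top (min_le_right _ _))]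
        exact min_le_left _ _
    obtain ⟨E, hEmem, hEd⟩ := hdense.approx S hS (measure_ne_top μ S) r hr0
    obtain ⟨t, B, hB, rfl⟩ := (mem_measurableCylinders E).mp hEmem
    obtain ⟨g, hg⟩ := exists_smul_disjoint horb t
    set T : (I → X₀) → (I → X₀) := fun x i => x (g⁻¹ • i) with hTdef
    set E : Set (I → X₀) := cylinder t B with hE
    have hEmeas : MeasurableSet E := hB.cylinder
    set F : Set (I → X₀) := T ⁻¹' E with hF
    set D : Set I := (fun i => g⁻¹ • i) '' ↑t with hD
    have hdisj : Disjoint (↑t : Set I) D := by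
      rw [Set.disjoint_right]
      rintro x ⟨i, hi, rfl⟩ hxt
      exact hg i hi _ hxt rfl
    have hindep : Indep (cylinderEvents (X := fun _ : I => X₀) (↑t : Set I))
        (cylinderEvents (X := fun _ : I => X₀) D) μ :=
      ProbabilityTheory.indep_iSup_of_disjoint
        (fun i => (measurable_pi_apply i).comap_le) hfun hdisj
    have hE1 : MeasurableSet[cylinderEvents (X := fun _ : I => X₀) (↑t : Set I)] E := by
      have hm : Measurable[cylinderEvents (X := fun _ : I => X₀) (↑t : Set I)]
          (fun x : I → X₀ => (fun i : t => x (i : I))) := by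
        letI : MeasurableSpace (I → X₀) := cylinderEvents (X := fun _ : I => X₀) (↑t : Set I)
        exact measurable_pi_lambda _ fun i => measurable_cylinderEvent_apply i.2
      exact hm hB
    have hE2 : MeasurableSet[cylinderEvents (X := fun _ : I => X₀) D] F := by
      have hm : Measurable[cylinderEvents (X := fun _ : I => X₀) D]
          (fun x : I → X₀ => (fun i : t => x (g⁻¹ • (i : I)))) := by
        letI : MeasurableSpace (I → X₀) := cylinderEvents (X := fun _ : I => X₀) D
        exact measurable_pi_lambda _ fun i => measurable_cylinderEvent_apply ⟨(i : I), i.2, rfl⟩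
      exact hm hB
    have hmul : μ (E ∩ F) = μ E * μ F :=
      ((ProbabilityTheory.Indep_iff _ _ μ).mp hindep) E F hE1 hE2
    have hTE : μ F = μ E := bernoulli_preimage_eq μ₀ μ hμ g hEmeas
    set b := μ E with hb
    set d := μ (S ∆ E) with hd
    have hdε : d ≤ ε := le_trans hEd.le hrε
    have hb1 : b ≤ 1 := prob_le_one
    have hd1 : d ≤ 1 := prob_le_one
    have hba : b ≤ a + d := by
      calc b ≤ a + μ (E ∆ S) := habs E S
      _ = a + d := by rw [symmDiff_comm]
    have hab : a ≤ b + d := habs S E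
    -- μ (S ∆ F) ≤ d
    have hSF : μ (S ∆ F) ≤ d := by
      have hsub : S ∆ F ⊆ (S ∆ (T ⁻¹' S)) ∪ ((T ⁻¹' S) ∆ F) := symmDiff_triangle S (T ⁻¹' S) F
      have h2 : (T ⁻¹' S) ∆ F = T ⁻¹' (S ∆ E) := by rw [Set.preimage_symmDiff]
      calc μ (S ∆ F) ≤ μ ((S ∆ (T ⁻¹' S)) ∪ ((T ⁻¹' S) ∆ F)) := measure_mono hsub
        _ ≤ μ (S ∆ (T ⁻¹' S)) + μ ((T ⁻¹' S) ∆ F) := measure_union_le _ _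
        _ = 0 + μ (T ⁻¹' (S ∆ E)) := by rw [symmDiff_comm S, hinv g, h2]
        _ = μ (S ∆ E) := by
            rw [zero_add, bernoulli_preimage_eq μ₀ μ hμ g (hS.symmDiff hEmeas)]
        _ = d := rfl
    -- μ (S ∆ (E ∩ F)) ≤ d + d
    have hSEF : μ (S ∆ (E ∩ F)) ≤ d + d := by
      have hsub : S ∆ (E ∩ F) ⊆ (S ∆ E) ∪ (S ∆ F) := by
        intro x hx
        simp only [Set.mem_symmDiff, Set.mem_union, Set.mem_inter_iff] at hx ⊢
        tauto
      calc μ (S ∆ (E ∩ F)) ≤ μ ((S ∆ E) ∪ (S ∆ F)) := measure_mono hsub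
        _ ≤ μ (S ∆ E) + μ (S ∆ F) := measure_union_le _ _
        _ ≤ d + d := add_le_add le_rfl hSF
    have hEFa : μ (E ∩ F) ≤ a + (d + d) := by
      calc μ (E ∩ F) ≤ a + μ ((E ∩ F) ∆ S) := habs _ S
        _ ≤ a + (d + d) := by rw [symmDiff_comm]; exact add_le_add le_rfl hSEF
    have haEF : a ≤ μ (E ∩ F) + (d + d) := by
      calc a ≤ μ (E ∩ F) + μ (S ∆ (E ∩ F)) := habs S _
        _ ≤ μ (E ∩ F) + (d + d) := add_le_add le_rfl hSEF
    have hEFbb : μ (E ∩ F) = b * b := by rw [hmul, hTE]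
    constructor
    · -- a ≤ a * a + 5 ε
      calc a ≤ b * b + (d + d) := by rw [← hEFbb]; exact haEF
        _ ≤ (a + d) * (a + d) + (d + d) := by gcongr
        _ = a * a + (a * d + d * a + d * d + (d + d)) := by ring
        _ ≤ a * a + (1 * ε + ε * 1 + ε * 1 + (ε + ε)) := by gcongr
        _ = a * a + 5 * ε := by ring
    · -- a * a ≤ a + 5 ε
      calc a * a ≤ (b + d) * (b + d) := by gcongr
        _ = b * b + (b * d + d * b + d * d) := by ring
        _ ≤ (a + (d + d)) + (1 * ε + ε * 1 + ε * 1) := by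
            rw [← hEFbb]
            gcongr
        _ = a + (2 * d + 3 * ε) := by ring
        _ ≤ a + (2 * ε + 3 * ε) := by gcongr
        _ = a + 5 * ε := by ring
  -- conclude a * a = a
  have haa : a * a = a := by
    have hfin : a * a ≠ ∞ := by
      exact ne_top_of_le_ne_top ENNReal.one_ne_top (by
        calc a * a ≤ 1 * 1 := by gcongr
          _ = 1 := one_mul 1)
    refine le_antisymm ?_ ?_
    · refine ENNReal.le_of_forall_pos_le_add fun ε hε _ => ?_
      have h5 : (0 : ℝ≥0∞) < (ε : ℝ≥0∞) / 5 :=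
        ENNReal.div_pos (by exact_mod_cast hε.ne') (by norm_num)
      have := (key ((ε : ℝ≥0∞) / 5) h5).2
      calc a * a ≤ a + 5 * ((ε : ℝ≥0∞) / 5) := this
        _ = a + ε := by rw [ENNReal.mul_div_cancel' (by norm_num) (by norm_num)]
    · refine ENNReal.le_of_forall_pos_le_add fun ε hε _ => ?_
      have h5 : (0 : ℝ≥0∞) < (ε : ℝ≥0∞) / 5 :=
        ENNReal.div_pos (by exact_mod_cast hε.ne') (by norm_num)
      have := (key ((ε : ℝ≥0∞) / 5) h5).1
      calc a ≤ a * a + 5 * ((ε : ℝ≥0∞) / 5) := this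
        _ = a * a + ε := by rw [ENNReal.mul_div_cancel' (by norm_num) (by norm_num)]
  rcases eq_or_ne a 0 with h0 | h0
  · exact Or.inl h0
  · right
    have hat : a ≠ ∞ := ne_top_of_le_ne_top ENNReal.one_ne_top ha1
    calc a = a⁻¹ * (a * a) := by
          rw [← mul_assoc, ENNReal.inv_mul_cancel h0 hat, one_mul]
      _ = a⁻¹ * a := by rw [haa]
      _ = 1 := ENNReal.inv_mul_cancel h0 hat
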